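/- arXiv:1204.2498 — 4 statements merged into one kernel-verified Lean document; each statement's English description precedes it below -/
import Mathlib

section
/- Let λ, θ, α > 0, θ̃ := sqrt(θ² + 4α/λ), and C₁(T,S) := (λθ̃/2)·coth((θ̃/2)(T−S) + κ(S)) − λθ/2 with κ(S) := arcoth((2C₀(S)+θλ)/(θ̃λ)), where C₀(S) := sqrt(λα)·coth(sqrt(α/λ)·S). Then for every T > 0 and 0 < S₁ < S₂ < T: 0 < C₁(T,0) < C₁(T,S₁) < C₁(T,S₂) < C₀(T) ≤ λ/T + sqrt(αλ), where C₁(T,0) := (λθ̃/2)·coth(θ̃T/2) − λθ/2. -/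
noncomputable def coth (x : ℝ) : ℝ := Real.cosh x / Real.sinh x

noncomputable def arcoth (y : ℝ) : ℝ := (1 / 2) * Real.log ((y + 1) / (y - 1))

lemma one_lt_coth {x : ℝ} (hx : 0 < x) : 1 < coth x := by
  have hs : 0 < Real.sinh x := Real.sinh_pos_iff.2 hx
  rw [coth, lt_div_iff₀ hs, one_mul]
  exact Real.sinh_lt_cosh x

lemma coth_anti {a b : ℝ} (ha : 0 < a) (hab : a < b) : coth b < coth a := by
  have hsa : 0 < Real.sinh a := Real.sinh_pos_iff.2 ha
  have hsb : 0 < Real.sinh b := Real.sinh_pos_iff.2 (ha.trans hab)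
  have key : coth a - coth b = Real.sinh (b - a) / (Real.sinh a * Real.sinh b) := by
    rw [coth, coth, Real.sinh_sub]
    field_simp
  have hpos : 0 < Real.sinh (b - a) / (Real.sinh a * Real.sinh b) :=
    div_pos (Real.sinh_pos_iff.2 (by linarith)) (mul_pos hsa hsb)
  linarith [key ▸ hpos]

lemma coth_arcoth {y : ℝ} (hy : 1 < y) : coth (arcoth y) = y := by
  have hz1 : (1:ℝ) < (y + 1) / (y - 1) := by
    rw [lt_div_iff₀ (by linarith)]; linarith
  set z := (y + 1) / (y - 1) with hz
  have hzpos : 0 < z := by linarith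
  set w := Real.exp ((1/2) * Real.log z) with hw
  have hw1 : 1 < w := by
    rw [hw]
    have : 0 < Real.log z := Real.log_pos hz1
    calc (1:ℝ) = Real.exp 0 := (Real.exp_zero).symm
    _ < _ := Real.exp_lt_exp.2 (by positivity)
  have hwsq : w * w = z := by
    rw [hw, ← Real.exp_add]
    rw [show (1/2) * Real.log z + (1/2) * Real.log z = Real.log z by ring]
    exact Real.exp_log hzpos
  have hwpos : 0 < w := by linarith
  have e1 : Real.exp (arcoth y) = w := by rw [arcoth, hw, hz]
  have e2 : Real.exp (-arcoth y) = w⁻¹ := by rw [Real.exp_neg, e1]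
  rw [coth, Real.cosh_eq, Real.sinh_eq, e1, e2]
  have hne : w - w⁻¹ ≠ 0 := by
    have h2 : w⁻¹ < 1 := by rw [inv_lt_one_iff₀]; right; exact hw1
    intro h; nlinarith
  have hy1 : (y:ℝ) - 1 ≠ 0 := by linarith
  have hzz : z * (y - 1) = y + 1 := by rw [hz]; field_simp
  have hww1 : w * w - 1 ≠ 0 := by nlinarith
  have step : (w + w⁻¹) / 2 / ((w - w⁻¹) / 2) = (w * w + 1) / (w * w - 1) := by
    have h2 : (w - w⁻¹) / 2 ≠ 0 := by
      intro h; apply hne; linarith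
    rw [div_eq_div_iff h2 hww1]
    field_simp
  rw [step, hwsq, hz]
  have hzm1 : (y + 1) / (y - 1) - 1 ≠ 0 := by
    rw [hz] at hz1; intro h; nlinarith [hz1]
  rw [div_eq_iff hzm1]
  field_simp
  ring

lemma coth_le_one_add_inv {x : ℝ} (hx : 0 < x) : coth x ≤ 1 + 1/x := by
  have hs : 0 < Real.sinh x := Real.sinh_pos_iff.2 hx
  have h1 : 2*x + 1 ≤ Real.exp (2*x) := by linarith [Real.add_one_le_exp (2*x)]
  have he : Real.exp x * Real.exp (-x) = 1 := by rw [← Real.exp_add]; simp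
  have h2x : Real.exp (2*x) = Real.exp x * Real.exp x := by
    rw [← Real.exp_add]; ring_nf
  have hexp : 0 < Real.exp (-x) := Real.exp_pos _
  have key : x*(Real.exp x + Real.exp (-x)) ≤ (x+1)*(Real.exp x - Real.exp (-x)) := by
    nlinarith [mul_nonneg hexp.le (by nlinarith : (0:ℝ) ≤ Real.exp x * Real.exp x - (2*x+1))]
  rw [coth, div_le_iff₀ hs, Real.sinh_eq, Real.cosh_eq]
  have hxne : x ≠ 0 := hx.ne'
  rw [show (1:ℝ) + 1/x = (x+1)/x by field_simp]
  rw [div_mul_eq_mul_div, le_div_iff₀ hx]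
  nlinarith [key]

set_option maxHeartbeats 1000000 in
theorem stmt6 (lam th al T S1 S2 : ℝ) (hlam : 0 < lam) (hth : 0 < th) (hal : 0 < al)
    (hS1 : 0 < S1) (h12 : S1 < S2) (h2T : S2 < T)
    (thT : ℝ) (hthT : thT = Real.sqrt (th ^ 2 + 4 * al / lam))
    (C0 : ℝ → ℝ)
    (hC0 : ∀ S, C0 S = Real.sqrt (lam * al) * coth (Real.sqrt (al / lam) * S))
    (kap : ℝ → ℝ)
    (hkap : ∀ S, kap S = arcoth ((2 * C0 S + th * lam) / (thT * lam)))
    (C1 : ℝ → ℝ → ℝ)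
    (hC1 : ∀ t S, C1 t S = lam * thT / 2 * coth (thT / 2 * (t - S) + kap S) - lam * th / 2)
    (C1T0 : ℝ) (hC1T0 : C1T0 = lam * thT / 2 * coth (thT * T / 2) - lam * th / 2) :
    0 < C1T0 ∧ C1T0 < C1 T S1 ∧ C1 T S1 < C1 T S2 ∧ C1 T S2 < C0 T ∧
      C0 T ≤ lam / T + Real.sqrt (al * lam) := by
  have hT : 0 < T := by linarith
  set m := Real.sqrt (lam * al) with hm_def
  set gam := Real.sqrt (al / lam) with hgam_def
  have hm : 0 < m := Real.sqrt_pos.2 (by positivity)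
  have hgam : 0 < gam := Real.sqrt_pos.2 (by positivity)
  have hmsq : m ^ 2 = lam * al := Real.sq_sqrt (by positivity)
  have hgm : gam * m = al := by
    rw [hgam_def, hm_def, ← Real.sqrt_mul (by positivity) _]
    rw [show al / lam * (lam * al) = al ^ 2 by field_simp]
    exact Real.sqrt_sq hal.le
  have hthT0 : 0 < thT := by
    rw [hthT]; exact Real.sqrt_pos.2 (by positivity)
  have hthTsq : thT ^ 2 = th ^ 2 + 4 * al / lam := by
    rw [hthT]; exact Real.sq_sqrt (by positivity)
  have hthTsq' : thT ^ 2 * lam = th ^ 2 * lam + 4 * al := by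
    rw [hthTsq]; field_simp
  have h5 : th ^ 2 < thT ^ 2 := by nlinarith [hthTsq', mul_pos hal hlam]
  have hthlt : th < thT := by nlinarith [h5, hthT0]
  have hlg : lam * gam = m := by
    have h1 : lam * gam * m = m * m := by
      rw [mul_assoc, hgm]; nlinarith
    exact mul_right_cancel₀ hm.ne' h1
  set p := (thT + th) * lam / 2 with hp_def
  set r := (thT - th) * lam / 2 with hr_def
  have hp : 0 < p := by rw [hp_def]; positivity
  have hr : 0 < r := by rw [hr_def]; nlinarith
  have hpr : p * r = lam * al := by
    rw [hp_def, hr_def]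
    field_simp
    linear_combination hthTsq'
  have hpmr : p - r = th * lam := by rw [hp_def, hr_def]; ring
  have hppr : p + r = thT * lam := by rw [hp_def, hr_def]; ring
  have hrm : r < m := by
    have h1 : m ^ 2 - r ^ 2 = r * (th * lam) := by
      linear_combination hmsq - hpr + r * hpmr
    nlinarith [h1, mul_pos hr (mul_pos hth hlam)]
  -- closed form for kap
  set K : ℝ → ℝ := fun S => (1/2) * (Real.log (m * Real.cosh (gam * S) + p * Real.sinh (gam * S))
      - Real.log (m * Real.cosh (gam * S) - r * Real.sinh (gam * S))) with hK_def
  have hD2pos : ∀ S : ℝ, 0 < S → 0 < m * Real.cosh (gam * S) - r * Real.sinh (gam * S) := by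
    intro S hS
    have h1 : 0 < Real.sinh (gam * S) := Real.sinh_pos_iff.2 (by positivity)
    have h2 : Real.sinh (gam * S) < Real.cosh (gam * S) := Real.sinh_lt_cosh _
    nlinarith
  have hD1pos : ∀ S : ℝ, 0 < S → 0 < m * Real.cosh (gam * S) + p * Real.sinh (gam * S) := by
    intro S hS
    have h1 : 0 < Real.sinh (gam * S) := Real.sinh_pos_iff.2 (by positivity)
    have h2 : 0 < Real.cosh (gam * S) := Real.cosh_pos _
    nlinarith
  have hg1 : ∀ S : ℝ, 0 < S → 1 < (2 * C0 S + th * lam) / (thT * lam) := by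
    intro S hS
    rw [hC0 S]
    rw [lt_div_iff₀ (by positivity)]
    have hcoth : 1 < coth (gam * S) := one_lt_coth (by positivity)
    have h2 : thT * lam = th * lam + 2 * r := by rw [hr_def]; ring
    have h3 : m < m * coth (gam * S) := by nlinarith
    linarith
  have hkap_eq : ∀ S : ℝ, 0 < S → kap S = K S := by
    intro S hS
    have hsu : 0 < Real.sinh (gam * S) := Real.sinh_pos_iff.2 (by positivity)
    have hg := hg1 S hS
    set g := (2 * C0 S + th * lam) / (thT * lam) with hg_def
    have hgm1 : (0:ℝ) < g - 1 := by linarith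
    have hratio : (g + 1) / (g - 1) =
        (m * Real.cosh (gam * S) + p * Real.sinh (gam * S)) /
        (m * Real.cosh (gam * S) - r * Real.sinh (gam * S)) := by
      rw [div_eq_div_iff hgm1.ne' (hD2pos S hS).ne']
      rw [hg_def, hC0 S, coth, hp_def, hr_def]
      field_simp
      ring
    rw [hkap S, arcoth, ← hg_def, hratio, hK_def,
      Real.log_div (hD1pos S hS).ne' (hD2pos S hS).ne']
  -- monotonicity of PHI
  set PHI : ℝ → ℝ := fun S => thT / 2 * S - K S with hPHI_def
  have hderiv : ∀ x : ℝ, 0 < x → HasDerivAt PHI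
      (thT / 2 - (1/2) * ((m * (Real.sinh (gam * x) * gam) + p * (Real.cosh (gam * x) * gam)) /
          (m * Real.cosh (gam * x) + p * Real.sinh (gam * x))
        - (m * (Real.sinh (gam * x) * gam) - r * (Real.cosh (gam * x) * gam)) /
          (m * Real.cosh (gam * x) - r * Real.sinh (gam * x)))) x := by
    intro x hx
    have hu : HasDerivAt (fun y : ℝ => gam * y) gam x := by
      simpa using (hasDerivAt_id x).const_mul gam
    have hsinh : HasDerivAt (fun y : ℝ => Real.sinh (gam * y)) (Real.cosh (gam * x) * gam) x :=
      hu.sinh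
    have hcosh : HasDerivAt (fun y : ℝ => Real.cosh (gam * y)) (Real.sinh (gam * x) * gam) x :=
      hu.cosh
    have hD1 : HasDerivAt (fun y : ℝ => m * Real.cosh (gam * y) + p * Real.sinh (gam * y))
        (m * (Real.sinh (gam * x) * gam) + p * (Real.cosh (gam * x) * gam)) x :=
      (hcosh.const_mul m).add (hsinh.const_mul p)
    have hD2 : HasDerivAt (fun y : ℝ => m * Real.cosh (gam * y) - r * Real.sinh (gam * y))
        (m * (Real.sinh (gam * x) * gam) - r * (Real.cosh (gam * x) * gam)) x :=
      (hcosh.const_mul m).sub (hsinh.const_mul r)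
    have hlog1 := hD1.log (hD1pos x hx).ne'
    have hlog2 := hD2.log (hD2pos x hx).ne'
    have hid : HasDerivAt (fun y : ℝ => thT / 2 * y) (thT / 2) x := by
      simpa using (hasDerivAt_id x).const_mul (thT / 2)
    exact hid.sub (((hlog1.sub hlog2).const_mul (1/2)).congr_deriv (by ring))
  have hderiv_pos : ∀ x : ℝ, 0 < x →
      0 < thT / 2 - (1/2) * ((m * (Real.sinh (gam * x) * gam) + p * (Real.cosh (gam * x) * gam)) /
          (m * Real.cosh (gam * x) + p * Real.sinh (gam * x))
        - (m * (Real.sinh (gam * x) * gam) - r * (Real.cosh (gam * x) * gam)) /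
          (m * Real.cosh (gam * x) - r * Real.sinh (gam * x))) := by
    intro x hx
    set su := Real.sinh (gam * x) with hsu_def
    set cu := Real.cosh (gam * x) with hcu_def
    have hsu : 0 < su := Real.sinh_pos_iff.2 (by positivity)
    have hcu : 0 < cu := Real.cosh_pos _
    have pyth : cu ^ 2 - su ^ 2 = 1 := Real.cosh_sq_sub_sinh_sq (gam * x)
    have hd1 := hD1pos x hx
    have hd2 := hD2pos x hx
    rw [← hsu_def, ← hcu_def] at hd1 hd2
    have hfrac : (m * (su * gam) + p * (cu * gam)) / (m * cu + p * su)
        - (m * (su * gam) - r * (cu * gam)) / (m * cu - r * su)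
        = gam * m * (p + r) / ((m * cu + p * su) * (m * cu - r * su)) := by
      rw [div_sub_div _ _ hd1.ne' hd2.ne']
      congr 1
      linear_combination (gam * m * (p + r)) * pyth
    have hD12 : (m * cu + p * su) * (m * cu - r * su) = lam * (al + th * m * (su * cu)) := by
      linear_combination cu ^ 2 * hmsq + (m * su * cu) * hpmr - su ^ 2 * hpr + lam * al * pyth
    rw [hfrac, hD12, hgm, hppr]
    have hX : 0 < th * m * (su * cu) := by positivity
    have h6 : al * (thT * lam) / (lam * (al + th * m * (su * cu))) < thT := by
      rw [div_lt_iff₀ (by positivity)]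
      nlinarith [mul_pos (mul_pos hthT0 hlam) hX]
    linarith
  have hmono : StrictMonoOn PHI (Set.Ioi 0) := by
    apply strictMonoOn_of_deriv_pos (convex_Ioi 0)
    · intro x hx
      exact (hderiv x hx).continuousAt.continuousWithinAt
    · intro x hx
      rw [interior_Ioi] at hx
      rw [(hderiv x hx).deriv]
      exact hderiv_pos x hx
  -- limit of PHI at 0+
  have hKcont : ContinuousAt K 0 := by
    have hc1 : ContinuousAt (fun S : ℝ => m * Real.cosh (gam * S) + p * Real.sinh (gam * S)) 0 := by
      fun_prop
    have hc2 : ContinuousAt (fun S : ℝ => m * Real.cosh (gam * S) - r * Real.sinh (gam * S)) 0 := by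
      fun_prop
    have hne1 : m * Real.cosh (gam * 0) + p * Real.sinh (gam * 0) ≠ 0 := by
      simp [Real.cosh_zero, Real.sinh_zero]; positivity
    have hne2 : m * Real.cosh (gam * 0) - r * Real.sinh (gam * 0) ≠ 0 := by
      simp [Real.cosh_zero, Real.sinh_zero]; positivity
    exact continuousAt_const.mul ((hc1.log hne1).sub (hc2.log hne2))
  have hK0 : K 0 = 0 := by
    rw [hK_def]
    simp [Real.cosh_zero, Real.sinh_zero]
  have hPHI0 : Filter.Tendsto PHI (nhdsWithin 0 (Set.Ioi 0)) (nhds 0) := by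
    have h1 : Filter.Tendsto PHI (nhds 0) (nhds (PHI 0)) := by
      apply ContinuousAt.tendsto
      exact (continuousAt_const.mul continuousAt_id).sub hKcont
    have h2 : PHI 0 = 0 := by rw [hPHI_def]; simp [hK0]
    rw [h2] at h1
    exact h1.mono_left nhdsWithin_le_nhds
  have hPHI_pos : ∀ s : ℝ, 0 < s → 0 < PHI s := by
    intro s hs
    have hhalf : (0:ℝ) < s / 2 := by linarith
    have h0 : 0 ≤ PHI (s / 2) := by
      apply le_of_tendsto hPHI0
      filter_upwards [Ioo_mem_nhdsGT_of_mem (Set.mem_Ico.2 ⟨le_refl 0, hhalf⟩)] with x hx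
      exact (hmono (Set.mem_Ioi.2 hx.1) (Set.mem_Ioi.2 hhalf) hx.2).le
    exact h0.trans_lt (hmono (Set.mem_Ioi.2 hhalf) (Set.mem_Ioi.2 hs) (by linarith))
  -- kap positivity
  have hkap_pos : ∀ S : ℝ, 0 < S → 0 < kap S := by
    intro S hS
    rw [hkap_eq S hS, hK_def]
    have h1 : 0 < Real.sinh (gam * S) := Real.sinh_pos_iff.2 (by positivity)
    have h2 := hD2pos S hS
    have h3 : m * Real.cosh (gam * S) - r * Real.sinh (gam * S)
        < m * Real.cosh (gam * S) + p * Real.sinh (gam * S) := by nlinarith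
    have := Real.log_lt_log h2 h3
    simp only []
    linarith
  -- differences of kap
  have hPHIlt : ∀ a b : ℝ, 0 < a → a < b → thT / 2 * a - kap a < thT / 2 * b - kap b := by
    intro a b ha hab
    rw [hkap_eq a ha, hkap_eq b (ha.trans hab)]
    exact hmono (Set.mem_Ioi.2 ha) (Set.mem_Ioi.2 (ha.trans hab)) hab
  have hS2 : (0:ℝ) < S2 := hS1.trans h12
  have hx1pos : 0 < thT / 2 * (T - S1) + kap S1 := by
    have := hkap_pos S1 hS1
    have h1 : 0 < thT / 2 * (T - S1) := by
      apply mul_pos (by positivity); linarith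
    linarith
  have hx2pos : 0 < thT / 2 * (T - S2) + kap S2 := by
    have := hkap_pos S2 hS2
    have h1 : 0 < thT / 2 * (T - S2) := by
      apply mul_pos (by positivity); linarith
    linarith
  have hkapT_pos : 0 < kap T := hkap_pos T hT
  have hPHI_S1 : 0 < thT / 2 * S1 - kap S1 := by
    rw [hkap_eq S1 hS1]; exact hPHI_pos S1 hS1
  have hlt10 : thT / 2 * (T - S1) + kap S1 < thT * T / 2 := by nlinarith [hPHI_S1]
  have hlt21 : thT / 2 * (T - S2) + kap S2 < thT / 2 * (T - S1) + kap S1 := by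
    have := hPHIlt S1 S2 hS1 h12
    linarith
  have hltT2 : kap T < thT / 2 * (T - S2) + kap S2 := by
    have := hPHIlt S2 T hS2 h2T
    linarith
  have hlamthT : (0:ℝ) < lam * thT / 2 := by positivity
  refine ⟨?_, ?_, ?_, ?_, ?_⟩
  · rw [hC1T0]
    have hc : 1 < coth (thT * T / 2) := one_lt_coth (by positivity)
    nlinarith [mul_lt_mul_of_pos_left hc hlamthT]
  · rw [hC1T0, hC1 T S1]
    have hc := coth_anti hx1pos hlt10
    have := mul_lt_mul_of_pos_left hc hlamthT
    linarith
  · rw [hC1 T S1, hC1 T S2]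
    have hc := coth_anti hx2pos hlt21
    have := mul_lt_mul_of_pos_left hc hlamthT
    linarith
  · rw [hC1 T S2]
    have hcothkapT : coth (kap T) = (2 * C0 T + th * lam) / (thT * lam) := by
      rw [hkap T]; exact coth_arcoth (hg1 T hT)
    have hend : lam * thT / 2 * coth (kap T) - lam * th / 2 = C0 T := by
      rw [hcothkapT]; field_simp; ring
    have hc := coth_anti hkapT_pos hltT2
    have := mul_lt_mul_of_pos_left hc hlamthT
    linarith
  · rw [hC0 T]
    have hle := coth_le_one_add_inv (show (0:ℝ) < gam * T by positivity)
    have hs : Real.sqrt (al * lam) = m := by rw [hm_def, mul_comm]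
    rw [hs]
    have heq : m * (1 + 1 / (gam * T)) = lam / T + m := by
      rw [← hlg]; field_simp; ring
    calc m * coth (gam * T) ≤ m * (1 + 1 / (gam * T)) :=
          mul_le_mul_of_nonneg_left hle hm.le
      _ = lam / T + m := heq
end

section
/- Let λ, θ, α, γ > 0 and θ̃ := sqrt(θ²+4α/λ). The function X̄(T,0) := (γ/(θ̃θλ) + θγ/(2θ̃α))·sinh(θ̃T/2)·exp(−θT/2) + (γ/(2α))·cosh(θ̃T/2)·exp(−θT/2) − γ/(2α) satisfies X̄(T,0) > 0 for all T > 0 and lim_{T→0+} X̄(T,0) = 0. -/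
theorem stmt10 (lam th al ga : ℝ) (hlam : 0 < lam) (hth : 0 < th) (hal : 0 < al)
    (hga : 0 < ga)
    (thT : ℝ) (hthT : thT = Real.sqrt (th ^ 2 + 4 * al / lam))
    (Xbar0 : ℝ → ℝ)
    (hXbar0 : ∀ T, Xbar0 T =
      (ga / (thT * th * lam) + th * ga / (2 * thT * al)) *
        Real.sinh (thT * T / 2) * Real.exp (-(th * T / 2)) +
      (ga / (2 * al)) * Real.cosh (thT * T / 2) * Real.exp (-(th * T / 2)) -
      ga / (2 * al)) :
    (∀ T > 0, 0 < Xbar0 T) ∧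
    Filter.Tendsto Xbar0 (nhdsWithin 0 (Set.Ioi 0)) (nhds 0) := by
  have hsum : 0 < th ^ 2 + 4 * al / lam := by positivity
  have hthTpos : 0 < thT := by rw [hthT]; exact Real.sqrt_pos.mpr hsum
  have hthT2 : thT ^ 2 = th ^ 2 + 4 * al / lam := by
    rw [hthT]; exact Real.sq_sqrt hsum.le
  have h4 : 0 < 4 * al / lam := by positivity
  have hgt : th < thT := by nlinarith [hthT2, h4]
  set C : ℝ := ga / (thT * th * lam) + th * ga / (2 * thT * al) with hCdef
  set D : ℝ := ga / (2 * al) with hDdef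
  have hC : 0 < C := by positivity
  have hD : 0 < D := by positivity
  have hDC : D < C := by
    have hkey : C - D = ga * (2 * al + lam * th ^ 2 - lam * thT * th) /
        (2 * al * thT * th * lam) := by
      rw [hCdef, hDdef]; field_simp
    have hmul : lam * thT ^ 2 = lam * th ^ 2 + 4 * al := by
      rw [hthT2]; field_simp
    have hnum : 0 < 2 * al + lam * th ^ 2 - lam * thT * th := by
      nlinarith [mul_pos hlam (pow_pos (sub_pos.mpr hgt) 2), hmul]
    have : 0 < C - D := by rw [hkey]; positivity
    linarith
  have hident : ∀ T, Xbar0 T =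
      (C + D) / 2 * (Real.exp ((thT - th) * T / 2) - 1) +
      (C - D) / 2 * (1 - Real.exp (-((thT + th) * T / 2))) := by
    intro T
    rw [hXbar0, Real.sinh_eq, Real.cosh_eq,
      show (thT - th) * T / 2 = thT * T / 2 + (-(th * T / 2)) by ring,
      show (-((thT + th) * T / 2)) = (-(thT * T / 2)) + (-(th * T / 2)) by ring,
      Real.exp_add, Real.exp_add]
    ring
  constructor
  · intro T hT
    rw [hident]
    have h1 : (1 : ℝ) < Real.exp ((thT - th) * T / 2) := by
      rw [show (1 : ℝ) = Real.exp 0 by simp]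
      apply Real.exp_lt_exp.mpr
      exact div_pos (mul_pos (sub_pos.mpr hgt) hT) two_pos
    have h2 : Real.exp (-((thT + th) * T / 2)) < 1 := by
      rw [show (1 : ℝ) = Real.exp 0 by simp]
      apply Real.exp_lt_exp.mpr
      have : 0 < (thT + th) * T / 2 := by positivity
      linarith
    have hP : 0 < (C + D) / 2 := by positivity
    have hQ : 0 < (C - D) / 2 := half_pos (sub_pos.mpr hDC)
    nlinarith
  · have hfun : Xbar0 = fun T =>
        (C + D) / 2 * (Real.exp ((thT - th) * T / 2) - 1) +
        (C - D) / 2 * (1 - Real.exp (-((thT + th) * T / 2))) := funext hident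
    have hcont : Continuous Xbar0 := by rw [hfun]; fun_prop
    have h0 : Xbar0 0 = 0 := by rw [hident]; simp
    have := (hcont.continuousAt (x := (0 : ℝ))).continuousWithinAt
      (s := Set.Ioi (0 : ℝ))
    rw [ContinuousWithinAt, h0] at this
    exact this
end

section
/- Let X : [0,T) → ℝ be absolutely continuous, nonzero initial value x, satisfying X'(t) = −ξ(t) with |ξ(t)| ≥ (C₁(T−t,0)/λ)·|X(t)| and X(t)·ξ(t) ≥ 0, where C₁(T−t,0) := (λθ̃/2)·coth((θ̃/2)(T−t)) − λθ/2 > 0. Then |X(t)| ≤ |x|·exp(θt/2)·sinh((θ̃/2)(T−t))/sinh((θ̃/2)T) for all t ∈ [0,T), and in particular lim_{t→T−} X(t) = 0. -/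
theorem stmt15 (lam th al T x : ℝ) (hlam : 0 < lam) (hth : 0 < th) (hal : 0 < al)
    (hT : 0 < T) (hx : x ≠ 0)
    (thT : ℝ) (hthT : thT = Real.sqrt (th ^ 2 + 4 * al / lam))
    (X xi : ℝ → ℝ) (hX0 : X 0 = x)
    (hderiv : ∀ t ∈ Set.Ico (0:ℝ) T, HasDerivAt X (-(xi t)) t)
    (hxi : ∀ t ∈ Set.Ico (0:ℝ) T,
      ((lam * thT / 2 * coth (thT / 2 * (T - t)) - lam * th / 2) / lam) * |X t| ≤ |xi t|)
    (hsign : ∀ t ∈ Set.Ico (0:ℝ) T, 0 ≤ X t * xi t) :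
    (∀ t ∈ Set.Ico (0:ℝ) T,
      |X t| ≤ |x| * Real.exp (th * t / 2) * Real.sinh (thT / 2 * (T - t)) /
        Real.sinh (thT / 2 * T)) ∧
    Filter.Tendsto X (nhdsWithin T (Set.Iio T)) (nhds 0) := by
  have hthTpos : 0 < thT := by
    rw [hthT]; exact Real.sqrt_pos.mpr (by positivity)
  set ψ : ℝ → ℝ := fun u => (X u) ^ 2 * Real.exp (-(th * u)) *
      ((Real.sinh (thT / 2 * (T - u))) ^ 2)⁻¹ with hψdef
  -- positivity of sinh on [0, T)
  have hSpos : ∀ s ∈ Set.Ico (0:ℝ) T, 0 < Real.sinh (thT / 2 * (T - s)) := by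
    intro s hs
    exact Real.sinh_pos_iff.mpr (by nlinarith [hs.2])
  have hS0pos : 0 < Real.sinh (thT / 2 * T) := Real.sinh_pos_iff.mpr (by positivity)
  -- derivative of ψ, with nonpositivity
  have hder : ∀ s ∈ Set.Ico (0:ℝ) T, ∃ d, HasDerivAt ψ d s ∧ d ≤ 0 := by
    intro s hs
    have hXs := hderiv s hs
    set Ss := Real.sinh (thT / 2 * (T - s)) with hSs
    set Cs := Real.cosh (thT / 2 * (T - s)) with hCs
    have hSsp : 0 < Ss := hSpos s hs
    have hSne : Ss ≠ 0 := ne_of_gt hSsp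
    have hlin : HasDerivAt (fun u : ℝ => thT / 2 * (T - u)) (-(thT / 2)) s := by
      simpa using ((hasDerivAt_id s).const_sub T).const_mul (thT / 2)
    have hS : HasDerivAt (fun u => Real.sinh (thT / 2 * (T - u))) (Cs * -(thT / 2)) s :=
      (Real.hasDerivAt_sinh _).comp s hlin
    have hSsq : HasDerivAt (fun u => (Real.sinh (thT / 2 * (T - u))) ^ 2)
        (2 * Ss ^ 1 * (Cs * -(thT / 2))) s := by
      simpa using hS.fun_pow 2
    have hg : HasDerivAt (fun u => ((Real.sinh (thT / 2 * (T - u))) ^ 2)⁻¹)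
        (-(2 * Ss ^ 1 * (Cs * -(thT / 2))) / (Ss ^ 2) ^ 2) s :=
      hSsq.inv (pow_ne_zero 2 hSne)
    have hXsq : HasDerivAt (fun u => (X u) ^ 2) (2 * X s ^ 1 * -(xi s)) s := by
      simpa using hXs.fun_pow 2
    have hexp : HasDerivAt (fun u : ℝ => Real.exp (-(th * u))) (Real.exp (-(th * s)) * (-th)) s := by
      have h := ((hasDerivAt_id s).const_mul th).fun_neg
      exact (Real.hasDerivAt_exp _).comp s (by simpa using h)
    have hf := hXsq.fun_mul hexp
    have hψd := hf.fun_mul hg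
    refine ⟨_, hψd, ?_⟩
    -- show the derivative is ≤ 0
    have hEp : 0 < Real.exp (-(th * s)) := Real.exp_pos _
    -- key inequality from hxi and hsign
    have hxi' : (thT / 2 * (Cs / Ss) - th / 2) * |X s| ≤ |xi s| := by
      have h := hxi s hs
      rw [coth] at h
      have heq : (lam * thT / 2 * (Cs / Ss) - lam * th / 2) / lam
          = thT / 2 * (Cs / Ss) - th / 2 := by
        field_simp
      rw [← hCs, ← hSs, heq] at h
      exact h
    have hxx : X s * xi s = |X s| * |xi s| := by
      rw [← abs_mul, abs_of_nonneg (hsign s hs)]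
    have key2 : thT * Cs * (X s) ^ 2 ≤ 2 * Ss * (X s * xi s) + th * Ss * (X s) ^ 2 := by
      have h1 : 2 * Ss * |X s| * ((thT / 2 * (Cs / Ss) - th / 2) * |X s|)
          ≤ 2 * Ss * |X s| * |xi s| :=
        mul_le_mul_of_nonneg_left hxi' (by positivity)
      have h2 : 2 * Ss * |X s| * ((thT / 2 * (Cs / Ss) - th / 2) * |X s|)
          = thT * Cs * (X s) ^ 2 - th * Ss * (X s) ^ 2 := by
        have hx2 : |X s| * |X s| = X s ^ 2 := by rw [← sq_abs (X s)]; ring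
        have hc : Ss * (Cs / Ss) = Cs := mul_div_cancel₀ Cs hSne
        linear_combination (|X s| * |X s| * thT) * hc + (thT * Cs - th * Ss) * hx2
      have h3 : 2 * Ss * |X s| * |xi s| = 2 * Ss * (X s * xi s) := by
        rw [hxx]; ring
      linarith [h1, h2.symm.le, h3.le]
    have hfact : (2 * X s ^ 1 * -(xi s) * Real.exp (-(th * s)) +
          (X s) ^ 2 * (Real.exp (-(th * s)) * (-th))) * ((Ss) ^ 2)⁻¹ +
          (X s) ^ 2 * Real.exp (-(th * s)) * (-(2 * Ss ^ 1 * (Cs * -(thT / 2))) / (Ss ^ 2) ^ 2)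
        = -(Real.exp (-(th * s)) / Ss ^ 3) *
          (2 * Ss * (X s * xi s) + th * Ss * (X s) ^ 2 - thT * Cs * (X s) ^ 2) := by
      field_simp
      ring
    rw [hfact]
    have hnn : 0 ≤ 2 * Ss * (X s * xi s) + th * Ss * (X s) ^ 2 - thT * Cs * (X s) ^ 2 := by
      linarith [key2]
    have hEq : 0 ≤ Real.exp (-(th * s)) / Ss ^ 3 := by positivity
    exact mul_nonpos_of_nonpos_of_nonneg (by linarith) hnn
  -- ψ is antitone up to any t < T, hence ψ t ≤ ψ 0
  have hmain : ∀ t ∈ Set.Ico (0:ℝ) T, ψ t ≤ ψ 0 := by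
    intro t ht
    have hsub : Set.Icc (0:ℝ) t ⊆ Set.Ico (0:ℝ) T := fun s hsx =>
      ⟨hsx.1, lt_of_le_of_lt hsx.2 ht.2⟩
    have hanti : AntitoneOn ψ (Set.Icc 0 t) := by
      apply antitoneOn_of_deriv_nonpos (convex_Icc 0 t)
      · intro s hsx
        exact ((hder s (hsub hsx)).choose_spec.1).continuousAt.continuousWithinAt
      · intro s hsx
        rw [interior_Icc] at hsx
        exact ((hder s (hsub (Set.Ioo_subset_Icc_self hsx))).choose_spec.1).differentiableAt.differentiableWithinAt
      · intro s hsx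
        rw [interior_Icc] at hsx
        obtain ⟨d, hd, hd0⟩ := hder s (hsub (Set.Ioo_subset_Icc_self hsx))
        rw [hd.deriv]; exact hd0
    exact hanti (Set.left_mem_Icc.mpr ht.1) (Set.right_mem_Icc.mpr ht.1) ht.1
  have hbound : ∀ t ∈ Set.Ico (0:ℝ) T,
      |X t| ≤ |x| * Real.exp (th * t / 2) * Real.sinh (thT / 2 * (T - t)) /
        Real.sinh (thT / 2 * T) := by
    intro t ht
    have hψ := hmain t ht
    set St := Real.sinh (thT / 2 * (T - t)) with hSt
    set S0 := Real.sinh (thT / 2 * T) with hS0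
    have hStp : 0 < St := hSpos t ht
    have hψ' : (X t) ^ 2 * (Real.exp (th * t))⁻¹ / St ^ 2 ≤ x ^ 2 / S0 ^ 2 := by
      have : ψ 0 = x ^ 2 / S0 ^ 2 := by
        simp [hψdef, hX0, hS0, div_eq_mul_inv]
      rw [← this]
      have : ψ t = (X t) ^ 2 * (Real.exp (th * t))⁻¹ / St ^ 2 := by
        simp [hψdef, hSt, div_eq_mul_inv, Real.exp_neg]
      rw [← this]
      exact hψ
    have hsq : (X t) ^ 2 ≤ (|x| * Real.exp (th * t / 2) * St / S0) ^ 2 := by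
      have hexpsq : (Real.exp (th * t / 2)) ^ 2 = Real.exp (th * t) := by
        rw [sq, ← Real.exp_add]; ring_nf
      rw [div_le_div_iff₀ (by positivity) (by positivity)] at hψ'
      rw [div_pow, mul_pow, mul_pow, sq_abs, hexpsq, le_div_iff₀ (by positivity)]
      have hEne : (Real.exp (th * t)) ≠ 0 := (Real.exp_pos _).ne'
      have h2 := mul_le_mul_of_nonneg_right hψ' (Real.exp_pos (th * t)).le
      calc (X t) ^ 2 * S0 ^ 2
          = (X t) ^ 2 * (Real.exp (th * t))⁻¹ * S0 ^ 2 * Real.exp (th * t) := by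
            field_simp
        _ ≤ x ^ 2 * St ^ 2 * Real.exp (th * t) := h2
        _ = x ^ 2 * Real.exp (th * t) * St ^ 2 := by ring
    have hRnn : 0 ≤ |x| * Real.exp (th * t / 2) * St / S0 := by positivity
    have := Real.sqrt_le_sqrt hsq
    · rwa [Real.sqrt_sq_eq_abs, Real.sqrt_sq hRnn] at this
  refine ⟨hbound, ?_⟩
  have hBtend : Filter.Tendsto
      (fun t => |x| * Real.exp (th * t / 2) * Real.sinh (thT / 2 * (T - t)) /
        Real.sinh (thT / 2 * T)) (nhdsWithin T (Set.Iio T)) (nhds 0) := by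
    have hc : Continuous (fun t : ℝ => |x| * Real.exp (th * t / 2) *
        Real.sinh (thT / 2 * (T - t)) / Real.sinh (thT / 2 * T)) := by
      fun_prop
    have h := (hc.tendsto T).mono_left (nhdsWithin_le_nhds (s := Set.Iio T))
    simpa using h
  apply squeeze_zero_norm' ?_ hBtend
  filter_upwards [Ioo_mem_nhdsLT_of_mem (Set.mem_Ioc.mpr ⟨hT, le_refl T⟩)] with t ht
  rw [Real.norm_eq_abs]
  exact hbound t ⟨ht.1.le, ht.2⟩
end

section
/- Let T > 0, λ, θ, α > 0 fixed, and consider the value function coefficient C₂(T, S, γ) from the explicit formula: C₂(T,S,γ) = (γ/(2α))·(−θλ + [λθ̃(sinh((θ̃/2)(T−S)) + μ(S)cosh((θ̃/2)(T−S))) − 2C₀(S)exp((θ/2)(S−T))]/[μ(S)sinh((θ̃/2)(T−S)) + cosh((θ̃/2)(T−S))]). Then C₂ is linear and strictly increasing in γ > 0, provided the bracketed factor is strictly positive, which holds for all 0 < S < T. -/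
theorem stmt19 (lam th al T S : ℝ) (hlam : 0 < lam) (hth : 0 < th) (hal : 0 < al)
    (hS : 0 < S) (hST : S < T)
    (thT : ℝ) (hthT : thT = Real.sqrt (th ^ 2 + 4 * al / lam))
    (C0S : ℝ) (hC0S : C0S = Real.sqrt (lam * al) * coth (Real.sqrt (al / lam) * S))
    (mu : ℝ) (hmu : mu = (2 * C0S + th * lam) / (thT * lam))
    (F : ℝ)
    (hF : F = (1 / (2 * al)) * (-(th * lam) +
      (lam * thT * (Real.sinh (thT / 2 * (T - S)) + mu * Real.cosh (thT / 2 * (T - S)))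
        - 2 * C0S * Real.exp (th / 2 * (S - T))) /
      (mu * Real.sinh (thT / 2 * (T - S)) + Real.cosh (thT / 2 * (T - S)))))
    (C2 : ℝ → ℝ)
    (hC2 : ∀ ga, C2 ga = (ga / (2 * al)) * (-(th * lam) +
      (lam * thT * (Real.sinh (thT / 2 * (T - S)) + mu * Real.cosh (thT / 2 * (T - S)))
        - 2 * C0S * Real.exp (th / 2 * (S - T))) /
      (mu * Real.sinh (thT / 2 * (T - S)) + Real.cosh (thT / 2 * (T - S))))) :
    0 < F ∧ (∀ ga, C2 ga = ga * F) ∧ StrictMonoOn C2 (Set.Ioi 0) := by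
  have ht : 0 < T - S := sub_pos.mpr hST
  have hthTpos : 0 < thT := by
    rw [hthT]; exact Real.sqrt_pos.mpr (by positivity)
  have hthT2 : thT ^ 2 = th ^ 2 + 4 * al / lam := by
    rw [hthT]; exact Real.sq_sqrt (by positivity)
  have hthTge : th ≤ thT := by
    nlinarith [hthT2, div_pos (by positivity : (0:ℝ) < 4 * al) hlam]
  have hC0pos : 0 < C0S := by
    rw [hC0S, coth]
    have hs : 0 < Real.sqrt (al / lam) * S := by
      positivity
    have h1 : 0 < Real.sinh (Real.sqrt (al / lam) * S) := Real.sinh_pos_iff.mpr hs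
    have h2 : 0 < Real.cosh (Real.sqrt (al / lam) * S) := Real.cosh_pos _
    have h3 : 0 < Real.sqrt (lam * al) := Real.sqrt_pos.mpr (by positivity)
    positivity
  have hmupos : 0 < mu := by
    rw [hmu]; positivity
  set x := thT / 2 * (T - S) with hx
  set y := th / 2 * (T - S) with hy
  have hxpos : 0 < x := by positivity
  have hsx : 0 < Real.sinh x := Real.sinh_pos_iff.mpr hxpos
  have hcx : 0 < Real.cosh x := Real.cosh_pos _
  have hD : 0 < mu * Real.sinh x + Real.cosh x := by positivity
  have hexpST : Real.exp (th / 2 * (S - T)) = Real.exp (-y) := by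
    congr 1; rw [hy]; ring
  -- weighted AM-GM via convexity of exp
  have hkey : thT * Real.exp (-y) ≤ thT * Real.cosh x - th * Real.sinh x := by
    set p := (thT - th) / (2 * thT) with hp
    set q := (thT + th) / (2 * thT) with hq
    have hp0 : 0 ≤ p := by
      apply div_nonneg (by linarith) (by linarith)
    have hq0 : 0 ≤ q := by
      apply div_nonneg (by linarith) (by linarith)
    have hpq : p + q = 1 := by
      rw [hp, hq, ← add_div, div_eq_one_iff_eq (mul_pos two_pos hthTpos).ne']; ring
    have hconv := convexOn_exp.2 (Set.mem_univ x) (Set.mem_univ (-x)) hp0 hq0 hpq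
    simp only [smul_eq_mul] at hconv
    have harg : p * x + q * -x = -y := by
      rw [hp, hq, hx, hy]
      field_simp
      try ring
    rw [harg] at hconv
    have h2 : 2 * thT * Real.exp (-y) ≤ (thT - th) * Real.exp x + (thT + th) * Real.exp (-x) := by
      have := mul_le_mul_of_nonneg_left hconv (by linarith : (0:ℝ) ≤ 2 * thT)
      calc 2 * thT * Real.exp (-y) ≤ 2 * thT * (p * Real.exp x + q * Real.exp (-x)) := this
        _ = (thT - th) * Real.exp x + (thT + th) * Real.exp (-x) := by
            rw [hp, hq]; field_simp; try ring
    rw [Real.cosh_eq, Real.sinh_eq]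
    linarith
  -- the bracketed factor minus th*lam*(denominator) is positive
  have hmu' : mu * (thT * lam) = 2 * C0S + th * lam := by
    rw [hmu]; field_simp
  have hE : 0 < (lam * thT * (Real.sinh x + mu * Real.cosh x)
      - 2 * C0S * Real.exp (-y)) - th * lam * (mu * Real.sinh x + Real.cosh x) := by
    have e1 : lam * (thT * thT) = lam * th ^ 2 + 4 * al := by
      have h2 : thT * thT = th ^ 2 + 4 * al / lam := by rw [← sq]; exact hthT2
      rw [h2]; field_simp; try ring
    have h1 : ((lam * thT * (Real.sinh x + mu * Real.cosh x)
        - 2 * C0S * Real.exp (-y)) - th * lam * (mu * Real.sinh x + Real.cosh x)) * thT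
        = 4 * al * Real.sinh x
          + 2 * C0S * (thT * Real.cosh x - th * Real.sinh x - thT * Real.exp (-y)) := by
      linear_combination (thT * Real.cosh x - th * Real.sinh x) * hmu' + Real.sinh x * e1
    have h2 : 0 < 4 * al * Real.sinh x
        + 2 * C0S * (thT * Real.cosh x - th * Real.sinh x - thT * Real.exp (-y)) := by
      nlinarith [hkey, hC0pos, hsx, hal]
    by_contra hle
    push_neg at hle
    have h4 := mul_nonpos_of_nonpos_of_nonneg hle hthTpos.le
    rw [h1] at h4
    linarith
  have hFpos : 0 < F := by
    rw [hF, hexpST]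
    have h3 : ∀ N D : ℝ, D ≠ 0 → -(th * lam) + N / D = (N - th * lam * D) / D := by
      intro N D hDne
      field_simp
      ring
    rw [h3 _ _ hD.ne']
    exact mul_pos (by positivity) (div_pos hE hD)
  have hlin : ∀ ga, C2 ga = ga * F := by
    intro ga
    rw [hC2 ga, hF]
    ring
  refine ⟨hFpos, hlin, ?_⟩
  intro a _ b _ hab
  rw [hlin a, hlin b]
  exact mul_lt_mul_of_pos_right hab hFpos
end
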